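/- Let f : ℝ³ → ℝ² be f(x₁, x₂, x₃) = (x₃, x₁² + (x₁x₂ - 1)² + x₃²). Then the image f(ℝ³) equals the open set {(t₁, t₂) ∈ ℝ² : t₂ > t₁²}, and consequently the problem Min_{ℝ²_+} {f(x) : x ∈ ℝ³} has no Pareto solution and no weak Pareto solution. -/

import Mathlib

/-- For `f(x₁,x₂,x₃) = (x₃, x₁² + (x₁x₂ - 1)² + x₃²)`, the image of `f` is the open
set `{t : t₂ > t₁²}`, and the problem `Min_{ℝ²_+} {f x : x ∈ ℝ³}` has no Pareto
solution and no weak Pareto solution. -/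
theorem stmt_13 (f : EuclideanSpace ℝ (Fin 3) → (Fin 2 → ℝ))
    (hf : ∀ x, f x = ![x 2, (x 0) ^ 2 + (x 0 * x 1 - 1) ^ 2 + (x 2) ^ 2]) :
    Set.range f = {t : Fin 2 → ℝ | (t 0) ^ 2 < t 1} ∧
      (¬ ∃ xstar, ∀ x, f x ≤ f xstar → f x = f xstar) ∧
      (¬ ∃ xstar, ∀ x, ¬ (∀ i, f x i < f xstar i)) := by
  have surj : ∀ t0 t1 : ℝ, t0 ^ 2 < t1 → ∃ x, f x = ![t0, t1] := by
    intro t0 t1 ht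
    have hs : (0:ℝ) < t1 - t0 ^ 2 := by linarith
    set a := Real.sqrt (t1 - t0 ^ 2) with ha
    have hapos : 0 < a := Real.sqrt_pos.mpr hs
    have hasq : a ^ 2 = t1 - t0 ^ 2 := Real.sq_sqrt hs.le
    refine ⟨WithLp.toLp 2 (![a, 1/a, t0] : Fin 3 → ℝ), ?_⟩
    rw [hf]
    funext i
    fin_cases i <;> simp
    field_simp
    nlinarith [hasq]
  have mem : ∀ x, (f x 0) ^ 2 < f x 1 := by
    intro x
    rw [hf]
    simp
    rcases eq_or_ne (x 0) 0 with h | h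
    · rw [h]; nlinarith [sq_nonneg (x 2)]
    · nlinarith [sq_nonneg (x 0 * x 1 - 1), pow_pos (abs_pos.mpr h) 2, sq_abs (x 0)]
  refine ⟨?_, ?_, ?_⟩
  · ext t
    simp only [Set.mem_range, Set.mem_setOf_eq]
    constructor
    · rintro ⟨x, rfl⟩; exact mem x
    · intro ht
      obtain ⟨x, hx⟩ := surj (t 0) (t 1) ht
      refine ⟨x, ?_⟩
      rw [hx]
      funext i; fin_cases i <;> simp
  · rintro ⟨xs, h⟩
    set b := f xs 1 with hb
    set c := f xs 0 with hc
    have hcb : c ^ 2 < b := mem xs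
    obtain ⟨x, hx⟩ := surj c ((c ^ 2 + b) / 2) (by linarith)
    have hle : f x ≤ f xs := by
      intro i
      fin_cases i
      · simp [hx]; exact hc.le
      · simp [hx]; linarith
    have := congrFun (h x hle) 1
    rw [hx] at this
    simp at this
    linarith
  · rintro ⟨xs, h⟩
    set b := f xs 1 with hb
    set c := f xs 0 with hc
    have hcb : c ^ 2 < b := mem xs
    have hb0 : (0:ℝ) ≤ b := le_trans (sq_nonneg c) hcb.le
    have hsq : Real.sqrt b * Real.sqrt b = b := Real.mul_self_sqrt hb0
    have habs : |c| < Real.sqrt b := by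
      nlinarith [abs_nonneg c, sq_abs c, Real.sqrt_nonneg b]
    set t0 := max (c - 1) ((c - Real.sqrt b) / 2) with ht0
    have ht0lt : t0 < c := by
      apply max_lt (by linarith)
      have : -Real.sqrt b < c := by
        have := neg_abs_le c; linarith
      linarith
    have ht0sq : t0 ^ 2 < b := by
      have h1 : t0 < Real.sqrt b := lt_trans ht0lt (lt_of_le_of_lt (le_abs_self c) habs)
      have h2 : -Real.sqrt b < t0 := by
        have hcge : -Real.sqrt b < c := by have := neg_abs_le c; linarith
        calc -Real.sqrt b < (c - Real.sqrt b) / 2 := by linarith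
        _ ≤ t0 := le_max_right _ _
      nlinarith
    obtain ⟨x, hx⟩ := surj t0 ((t0 ^ 2 + b) / 2) (by linarith)
    refine h x ?_
    intro i
    fin_cases i
    · simpa [hx] using ht0lt
    · simp [hx]; linarith
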